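/- Let q = 2 and ℓ ≥ 2. If c is a codeword of the dual of the affine Hermitian Grassmann code C^H(ℓ)^⊥ over F_4, then the support of c cannot have size 3. (Since the all-ones vector lies in C^H(ℓ) and C^H(ℓ)^⊥ is 2-invariant, a weight-3 dual codeword would be a multiple of a binary vector whose three nonzero entries sum to 1 ≠ 0 in F_2.) -/

import Mathlib

/-- The index set of minors: pairs of row/column subsets of equal size. -/
def MinorIndex (ℓ : ℕ) :=
  {p : Finset (Fin ℓ) × Finset (Fin ℓ) // p.1.card = p.2.card}

noncomputable instance (ℓ : ℕ) : Fintype (MinorIndex ℓ) := by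
  unfold MinorIndex; exact Fintype.ofFinite _

/-- The minor det_{I,J}(H) of a matrix H, on rows I and columns J. -/
noncomputable def minorAt {K : Type*} [Field K] {ℓ : ℕ}
    (H : Matrix (Fin ℓ) (Fin ℓ) K) (p : MinorIndex ℓ) : K :=
  (Matrix.of fun a b : Fin p.1.1.card =>
    H (p.1.1.orderEmbOfFin rfl a) (p.1.2.orderEmbOfFin p.2.symm b)).det

/-- Evaluation of an F_{q²}-linear combination of minors of the generic Hermitian
    matrix at all ℓ×ℓ Hermitian matrices. -/
noncomputable def hermEval (q ℓ : ℕ) (K : Type*) [Field K]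
    (f : MinorIndex ℓ → K)
    (H : {H : Matrix (Fin ℓ) (Fin ℓ) K // ∀ i j, H j i = (H i j) ^ q}) : K :=
  ∑ p : MinorIndex ℓ, f p * minorAt H.1 p

noncomputable instance (ℓ : ℕ) (K : Type*) [Field K] [Finite K] :
    Fintype {H : Matrix (Fin ℓ) (Fin ℓ) K // ∀ i j, H j i = (H i j) ^ 2} :=
  Fintype.ofFinite _

-- helper: orderEmbOfFin cast
lemma orderEmb_cast {α : Type*} [LinearOrder α] (s : Finset α) {n m : ℕ}
    (h : s.card = n) (h' : s.card = m) (e : Fin n) :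
    s.orderEmbOfFin h e = s.orderEmbOfFin h' (Fin.cast (h.symm.trans h') e) := by
  subst h h'; rfl

def swapM {ℓ : ℕ} : MinorIndex ℓ ≃ MinorIndex ℓ where
  toFun p := ⟨(p.1.2, p.1.1), p.2.symm⟩
  invFun p := ⟨(p.1.2, p.1.1), p.2.symm⟩
  left_inv p := rfl
  right_inv p := rfl

lemma minor_swap {K : Type*} [Field K] [Fact (Nat.Prime 2)] [CharP K 2] {ℓ : ℕ}
    (H : Matrix (Fin ℓ) (Fin ℓ) K) (hH : ∀ i j, H j i = (H i j) ^ 2)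
    (p : MinorIndex ℓ) :
    minorAt H (swapM p) = (minorAt H p) ^ 2 := by
  obtain ⟨⟨I, J⟩, h⟩ := p
  show _ = _
  have hfrob : (minorAt H ⟨(I,J),h⟩) ^ 2 = frobenius K 2 (minorAt H ⟨(I,J),h⟩) := rfl
  rw [hfrob]
  unfold minorAt
  rw [RingHom.map_det, RingHom.mapMatrix_apply]
  -- the mapped matrix
  have hmap : (Matrix.of fun a b : Fin I.card =>
      H (I.orderEmbOfFin rfl a) (J.orderEmbOfFin h.symm b)).map (frobenius K 2)
      = Matrix.of fun a b : Fin I.card =>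
        H (J.orderEmbOfFin h.symm b) (I.orderEmbOfFin rfl a) := by
    ext a b
    simp [Matrix.map_apply, frobenius_def, ← hH]
  rw [hmap, ← Matrix.det_transpose]
  rw [← Matrix.det_submatrix_equiv_self (finCongr (h.symm : J.card = I.card))]
  congr 1


/-- For q = 2 (so the code is over F₄), no codeword of the dual of the affine
    Hermitian Grassmann code has support of size 3. -/
theorem stmt17 (ℓ : ℕ) (hℓ : 2 ≤ ℓ)
    (K : Type*) [Field K] [Fintype K] (hK : Fintype.card K = 4)
    (c : {H : Matrix (Fin ℓ) (Fin ℓ) K // ∀ i j, H j i = (H i j) ^ 2} → K)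
    (hdual : ∀ f : MinorIndex ℓ → K,
      ∑ H : {H : Matrix (Fin ℓ) (Fin ℓ) K // ∀ i j, H j i = (H i j) ^ 2},
        c H * hermEval 2 ℓ K f H = 0) :
    {H | c H ≠ 0}.ncard ≠ 3 := by
  classical
  intro h3
  -- characteristic 2
  have h4 : (4 : K) = 0 := by
    have := FiniteField.cast_card_eq_zero K
    rw [hK] at this; exact_mod_cast this
  have h2 : (2 : K) = 0 := by
    have : (2 : K) * 2 = 0 := by rw [show (2:K)*2 = 4 by norm_num, h4]
    rcases mul_eq_zero.mp this with h | h <;> exact h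
  haveI : Fact (Nat.Prime 2) := ⟨Nat.prime_two⟩
  haveI hcp : CharP K 2 := ringChar.of_eq (CharP.ringChar_of_prime_eq_zero Nat.prime_two h2)
  have hx4 : ∀ x : K, x ^ 4 = x := fun x => by rw [← hK]; exact FiniteField.pow_card x
  have hchar2 : ∀ x : K, x + x = 0 := fun x => by
    rw [show x + x = 2 * x by ring, h2, zero_mul]
  -- the square of a dual codeword is a dual codeword
  have hsq : ∀ f : MinorIndex ℓ → K,
      ∑ H : {H : Matrix (Fin ℓ) (Fin ℓ) K // ∀ i j, H j i = (H i j) ^ 2},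
        (c H) ^ 2 * hermEval 2 ℓ K f H = 0 := by
    intro f
    have h0 := hdual (fun p => (f (swapM p)) ^ 2)
    have hkey : (∑ H : {H : Matrix (Fin ℓ) (Fin ℓ) K // ∀ i j, H j i = (H i j) ^ 2},
        c H * hermEval 2 ℓ K (fun p => (f (swapM p)) ^ 2) H) ^ 2
        = ∑ H : {H : Matrix (Fin ℓ) (Fin ℓ) K // ∀ i j, H j i = (H i j) ^ 2},
            (c H) ^ 2 * hermEval 2 ℓ K f H := by
      have hfr : ∀ y : K, frobenius K 2 y = y ^ 2 := fun y => rfl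
      rw [show ∀ y : K, y ^ 2 = frobenius K 2 y from fun _ => rfl]
      rw [map_sum]
      refine Finset.sum_congr rfl fun H _ => ?_
      rw [map_mul, hfr, hfr]
      congr 1
      -- (hermEval g H)^2 = hermEval f H
      show frobenius K 2 (hermEval 2 ℓ K (fun p => (f (swapM p)) ^ 2) H) = _
      unfold hermEval
      rw [map_sum]
      rw [← Equiv.sum_comp swapM (fun p => f p * minorAt H.1 p)]
      refine Finset.sum_congr rfl fun p _ => ?_
      rw [map_mul, hfr, hfr, ← pow_mul, show 2*2 = 4 from rfl, hx4,
        ← minor_swap H.1 H.2 p]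
    rw [h0] at hkey
    rw [← hkey]
    rw [zero_pow]; norm_num
  -- evaluation at indicator functions gives minors
  have heval : ∀ (p : MinorIndex ℓ) H,
      hermEval 2 ℓ K (fun p' => if p' = p then (1:K) else 0) H = minorAt H.1 p := by
    intro p H
    unfold hermEval
    simp
  -- empty minor is the constant 1
  have hminor0 : ∀ (H : Matrix (Fin ℓ) (Fin ℓ) K),
      minorAt H (⟨(∅, ∅), rfl⟩ : MinorIndex ℓ) = 1 := by
    intro H
    unfold minorAt
    haveI : IsEmpty (Fin (((⟨(∅, ∅), rfl⟩ : MinorIndex ℓ)).1.1.card)) := by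
      simp only [Finset.card_empty]; infer_instance
    exact Matrix.det_isEmpty
  -- singleton minors are matrix entries
  have hminor1 : ∀ (H : Matrix (Fin ℓ) (Fin ℓ) K) (i j : Fin ℓ),
      minorAt H (⟨({i}, {j}), by simp⟩ : MinorIndex ℓ) = H i j := by
    intro H i j
    unfold minorAt
    haveI : Unique (Fin ((({i} : Finset (Fin ℓ)), ({j} : Finset (Fin ℓ))).1.card)) := by
      simp only [Finset.card_singleton]; infer_instance
    rw [Matrix.det_unique]
    simp only [Matrix.of_apply]
    congr 1
    · exact Finset.mem_singleton.mp (Finset.orderEmbOfFin_mem _ _ _)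
    · exact Finset.mem_singleton.mp (Finset.orderEmbOfFin_mem _ _ _)
  -- extract the three support points
  obtain ⟨x, y, z, hxy, hxz, hyz, hset⟩ := Set.ncard_eq_three.mp h3
  have hcx : c x ≠ 0 := by
    have : x ∈ {H | c H ≠ 0} := by rw [hset]; simp
    exact this
  have hcy : c y ≠ 0 := by
    have : y ∈ {H | c H ≠ 0} := by rw [hset]; simp
    exact this
  have hcz : c z ≠ 0 := by
    have : z ∈ {H | c H ≠ 0} := by rw [hset]; simp
    exact this
  have hzero : ∀ H, H ≠ x → H ≠ y → H ≠ z → c H = 0 := by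
    intro H h1 h2' h3'
    by_contra hc
    have : H ∈ {H | c H ≠ 0} := hc
    rw [hset] at this
    simp at this
    tauto
  -- sum over support
  have hsum3 : ∀ F : {H : Matrix (Fin ℓ) (Fin ℓ) K // ∀ i j, H j i = (H i j) ^ 2} → K,
      (∀ H, c H = 0 → F H = 0) →
      ∑ H, F H = F x + F y + F z := by
    intro F hF
    rw [← Finset.sum_subset (Finset.subset_univ ({x, y, z} : Finset _))]
    · rw [Finset.sum_insert (by simp [hxy, hxz]), Finset.sum_insert (by simp [hyz]),
        Finset.sum_singleton, add_assoc]
    · intro H _ hH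
      simp only [Finset.mem_insert, Finset.mem_singleton, not_or] at hH
      exact hF H (hzero H hH.1 hH.2.1 hH.2.2)
  -- the dual codeword d := c x * c² + (c x)² * c
  set d : {H : Matrix (Fin ℓ) (Fin ℓ) K // ∀ i j, H j i = (H i j) ^ 2} → K :=
    fun H => c x * (c H) ^ 2 + (c x) ^ 2 * c H with hd
  have hddual : ∀ f : MinorIndex ℓ → K, ∑ H, d H * hermEval 2 ℓ K f H = 0 := by
    intro f
    have e1 := hsq f
    have e2 := hdual f
    calc ∑ H, d H * hermEval 2 ℓ K f H
        = c x * (∑ H, (c H) ^ 2 * hermEval 2 ℓ K f H)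
          + (c x) ^ 2 * (∑ H, c H * hermEval 2 ℓ K f H) := by
          rw [Finset.mul_sum, Finset.mul_sum, ← Finset.sum_add_distrib]
          refine Finset.sum_congr rfl fun H _ => ?_
          simp [hd]; ring
      _ = 0 := by rw [e1, e2]; ring
  -- sum of c over support is 0 (constants are in the code)
  have hsumc : c x + c y + c z = 0 := by
    set f0 : MinorIndex ℓ → K :=
      fun p' => if p' = (⟨(∅, ∅), rfl⟩ : MinorIndex ℓ) then (1:K) else 0 with hf0
    set F : {H : Matrix (Fin ℓ) (Fin ℓ) K // ∀ i j, H j i = (H i j) ^ 2} → K :=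
      fun H => c H * hermEval 2 ℓ K f0 H with hF
    have h0 : F x + F y + F z = 0 := by
      rw [← hsum3 F (fun H h => by simp [hF, h])]
      exact hdual f0
    simp only [hF, hf0] at h0
    erw [heval, heval, heval, hminor0] at h0
    simpa using h0
  have hneg : ∀ w : K, -w = w := fun w => by
    rw [neg_eq_iff_add_eq_zero]; exact hchar2 w
  -- d vanishes at x, and equals c x * c y * c z at y and z
  have hdx : d x = 0 := by
    show c x * (c x) ^ 2 + (c x) ^ 2 * c x = 0
    rw [show c x * (c x) ^ 2 + (c x) ^ 2 * c x = c x ^ 3 + c x ^ 3 by ring]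
    exact hchar2 _
  have hcyx : c y + c x = c z := by
    have : c y + c x = -(c z) := by linear_combination hsumc
    rw [this, hneg]
  have hczx : c z + c x = c y := by
    have : c z + c x = -(c y) := by linear_combination hsumc
    rw [this, hneg]
  have hdy : d y = c x * c y * c z := by
    show c x * (c y) ^ 2 + (c x) ^ 2 * c y = _
    rw [show c x * (c y) ^ 2 + (c x) ^ 2 * c y = c x * c y * (c y + c x) by ring, hcyx]
  have hdz : d z = c x * c y * c z := by
    show c x * (c z) ^ 2 + (c x) ^ 2 * c z = _
    rw [show c x * (c z) ^ 2 + (c x) ^ 2 * c z = c x * c z * (c z + c x) by ring, hczx]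
    ring
  have hu : c x * c y * c z ≠ 0 := by
    exact mul_ne_zero (mul_ne_zero hcx hcy) hcz
  -- coordinate functions are in the code, so y and z agree entrywise
  have hcoord : ∀ i j : Fin ℓ, y.1 i j = z.1 i j := by
    intro i j
    have hdd := hddual (fun p' => if p' = (⟨({i}, {j}), by simp⟩ : MinorIndex ℓ)
      then (1:K) else 0)
    rw [hsum3 _ (by
      intro H h
      show d H * _ = 0
      simp [hd, h])] at hdd
    erw [heval, heval, heval, hminor1, hminor1, hminor1, hdx, hdy, hdz, zero_mul,
      zero_add] at hdd
    have : c x * c y * c z * (y.1 i j + z.1 i j) = 0 := by linear_combination hdd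
    have h0 : y.1 i j + z.1 i j = 0 := by
      rcases mul_eq_zero.mp this with h | h
      · exact absurd h hu
      · exact h
    have : y.1 i j = -(z.1 i j) := by linear_combination h0
    rw [this, hneg]
  exact hyz (Subtype.ext (by ext i j; exact hcoord i j))
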